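/- With f(k₁,k₂) = 1 + e^{ik₁} + e^{ik₂}, at each zero k* of f the function f has a nonvanishing differential; consequently the eigenvalue functions ±|f| have a conical (Dirac-point) structure at k*: there exist constants c₂ > c₁ > 0 and a neighborhood U of k* such that c₁·dist(k, k*) ≤ |f(k)| ≤ c₂·dist(k, k*) for all k ∈ U. -/

import Mathlib

/-- `f(k₁,k₂) = 1 + e^{ik₁} + e^{ik₂}` as a map on `ℝ²` (periodic, hence descends to `T²`). -/
noncomputable def grapheneF : ℝ × ℝ → ℂ := fun k =>
  1 + Complex.exp (Complex.I * k.1) + Complex.exp (Complex.I * k.2)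

/-- At each zero `k*` of `f(k₁,k₂) = 1 + e^{ik₁} + e^{ik₂}` the differential of `f` is
nonvanishing; consequently `|f|` has a conical (Dirac-point) structure at `k*`: there are
constants `c₂ > c₁ > 0` and a neighborhood `U` of `k*` on which
`c₁ · dist(k,k*) ≤ |f(k)| ≤ c₂ · dist(k,k*)`. -/
private lemma graphene_norm_sq_aux (v : ℝ × ℝ) (w : ℝ) (hw : 0 ≤ w)
    (hsq : w ^ 2 = v.1 ^ 2 + v.2 ^ 2 - v.1 * v.2) : 1/2 * ‖v‖ ≤ w := by
  have hnv : ‖v‖ ^ 2 ≤ v.1 ^ 2 + v.2 ^ 2 := by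
    rw [Prod.norm_def]
    rcases le_total ‖v.1‖ ‖v.2‖ with h | h
    · rw [max_eq_right h, Real.norm_eq_abs, sq_abs]; nlinarith [sq_nonneg v.1]
    · rw [max_eq_left h, Real.norm_eq_abs, sq_abs]; nlinarith [sq_nonneg v.2]
  nlinarith [norm_nonneg v, hsq, hnv, sq_nonneg (v.1 - v.2)]

set_option maxHeartbeats 1000000 in
theorem graphene_conical_at_zero (k : ℝ × ℝ) (hk : grapheneF k = 0) :
    fderiv ℝ grapheneF k ≠ 0 ∧
    ∃ c₁ c₂ : ℝ, 0 < c₁ ∧ c₁ < c₂ ∧ ∃ U ∈ nhds k, ∀ x ∈ U,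
      c₁ * dist x k ≤ ‖grapheneF x‖ ∧
      ‖grapheneF x‖ ≤ c₂ * dist x k := by
  set a := Complex.exp (Complex.I * k.1) with ha_def
  set b := Complex.exp (Complex.I * k.2) with hb_def
  set F : ℝ × ℝ →L[ℝ] ℂ := Complex.ofRealCLM.comp (ContinuousLinearMap.fst ℝ ℝ ℝ) with hF_def
  set S : ℝ × ℝ →L[ℝ] ℂ := Complex.ofRealCLM.comp (ContinuousLinearMap.snd ℝ ℝ ℝ) with hS_def
  set L : ℝ × ℝ →L[ℝ] ℂ := (Complex.I * a) • F + (Complex.I * b) • S with hL_def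
  have hLapp : ∀ v : ℝ × ℝ, L v = Complex.I * a * v.1 + Complex.I * b * v.2 := by
    intro v
    simp [hL_def, hF_def, hS_def, smul_eq_mul]
  -- derivative of first exponential
  have hF1 : HasFDerivAt (fun x : ℝ × ℝ => (x.1 : ℂ)) F k :=
    Complex.ofRealCLM.hasFDerivAt.comp k hasFDerivAt_fst
  have hS1 : HasFDerivAt (fun x : ℝ × ℝ => (x.2 : ℂ)) S k :=
    Complex.ofRealCLM.hasFDerivAt.comp k hasFDerivAt_snd
  have hexp1 : HasDerivAt (fun z : ℂ => Complex.exp (Complex.I * z)) (a * Complex.I) (k.1 : ℂ) := by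
    have h := ((hasDerivAt_id (k.1 : ℂ)).const_mul Complex.I).cexp
    simpa using h
  have hexp2 : HasDerivAt (fun z : ℂ => Complex.exp (Complex.I * z)) (b * Complex.I) (k.2 : ℂ) := by
    have h := ((hasDerivAt_id (k.2 : ℂ)).const_mul Complex.I).cexp
    simpa using h
  have e1 : HasFDerivAt (fun x : ℝ × ℝ => Complex.exp (Complex.I * x.1))
      ((Complex.I * a) • F) k := by
    have h := (hexp1.hasFDerivAt.restrictScalars ℝ).comp k hF1
    have heq : ((ContinuousLinearMap.toSpanSingleton ℂ (a * Complex.I)).restrictScalars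
        ℝ).comp F = (Complex.I * a) • F := by
      refine ContinuousLinearMap.ext fun v => ?_
      simp [hF_def, smul_eq_mul]
      ring
    rw [heq] at h
    exact h
  have e2 : HasFDerivAt (fun x : ℝ × ℝ => Complex.exp (Complex.I * x.2))
      ((Complex.I * b) • S) k := by
    have h := (hexp2.hasFDerivAt.restrictScalars ℝ).comp k hS1
    have heq : ((ContinuousLinearMap.toSpanSingleton ℂ (b * Complex.I)).restrictScalars
        ℝ).comp S = (Complex.I * b) • S := by
      refine ContinuousLinearMap.ext fun v => ?_
      simp [hS_def, smul_eq_mul]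
      ring
    rw [heq] at h
    exact h
  have hL : HasFDerivAt grapheneF L k := by
    have h := (e1.add e2).const_add (1 : ℂ)
    have : grapheneF = fun x : ℝ × ℝ =>
        1 + (Complex.exp (Complex.I * x.1) + Complex.exp (Complex.I * x.2)) := by
      funext x; simp [grapheneF]; ring
    rw [this]
    exact h
  -- algebraic facts about a and b
  have ha1 : ‖a‖ = 1 := by
    rw [ha_def, Complex.norm_exp]
    simp
  have hb1 : ‖b‖ = 1 := by
    rw [hb_def, Complex.norm_exp]
    simp
  have ha0 : a ≠ 0 := Complex.exp_ne_zero _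
  have hsum : 1 + a + b = 0 := hk
  have hbval : b = -1 - a := by linear_combination hsum
  have hna : a.re ^ 2 + a.im ^ 2 = 1 := by
    have h := Complex.sq_norm a
    rw [ha1, Complex.normSq_apply] at h
    linear_combination -h
  have hnb : b.re ^ 2 + b.im ^ 2 = 1 := by
    have h := Complex.sq_norm b
    rw [hb1, Complex.normSq_apply] at h
    linear_combination -h
  have hbre : b.re = -1 - a.re := by rw [hbval]; simp
  have hbim : b.im = -a.im := by rw [hbval]; simp
  have hare : a.re = -1/2 := by
    rw [hbre, hbim] at hnb
    linear_combination (1/2) * hnb - (1/2) * hna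
  have haim : a.im ^ 2 = 3/4 := by linear_combination hna - (a.re - 1/2) * hare
  -- lower bound for L
  have hlow : ∀ v : ℝ × ℝ, (1/2 : ℝ) * ‖v‖ ≤ ‖L v‖ := by
    intro v
    have hLsq : ‖L v‖ ^ 2 = v.1 ^ 2 + v.2 ^ 2 - v.1 * v.2 := by
      rw [hLapp]
      have hre : (Complex.I * a * v.1 + Complex.I * b * v.2).re
          = -(a.im * v.1) - b.im * v.2 := by simp; ring
      have him : (Complex.I * a * v.1 + Complex.I * b * v.2).im
          = a.re * v.1 + b.re * v.2 := by simp
      rw [Complex.sq_norm, Complex.normSq_apply, hre, him,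
        hbre, hbim, hare]
      linear_combination (v.1 - v.2)^2 * haim
    exact graphene_norm_sq_aux v _ (norm_nonneg _) hLsq
  -- upper bound for L
  have hup : ∀ v : ℝ × ℝ, ‖L v‖ ≤ 2 * ‖v‖ := by
    intro v
    rw [hLapp]
    have h1 : ‖Complex.I * a * (v.1 : ℂ)‖ = ‖v.1‖ := by
      simp [norm_mul, ha1]
    have h2 : ‖Complex.I * b * (v.2 : ℂ)‖ = ‖v.2‖ := by
      simp [norm_mul, hb1]
    calc ‖Complex.I * a * (v.1 : ℂ) + Complex.I * b * (v.2 : ℂ)‖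
        ≤ ‖Complex.I * a * (v.1 : ℂ)‖ + ‖Complex.I * b * (v.2 : ℂ)‖ := norm_add_le _ _
      _ = ‖v.1‖ + ‖v.2‖ := by rw [h1, h2]
      _ ≤ ‖v‖ + ‖v‖ := add_le_add (norm_fst_le v) (norm_snd_le v)
      _ = 2 * ‖v‖ := by ring
  constructor
  · rw [hL.fderiv]
    intro h
    have h0 : L (1, 0) = 0 := by simp [h]
    rw [hLapp] at h0
    simp at h0
    exact ha0 h0
  · refine ⟨1/4, 3, by norm_num, by norm_num, ?_⟩
    have hlo := hL.isLittleO
    have hev : ∀ᶠ x in nhds k, ‖grapheneF x - grapheneF k - L (x - k)‖ ≤ 1/4 * ‖x - k‖ :=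
      (hlo.def (by norm_num : (0:ℝ) < 1/4))
    obtain ⟨U, hU, hU2⟩ := Filter.eventually_iff_exists_mem.mp hev
    refine ⟨U, hU, fun x hx => ?_⟩
    have hx1 : ‖grapheneF x - L (x - k)‖ ≤ 1/4 * ‖x - k‖ := by
      have := hU2 x hx
      rwa [hk, sub_zero] at this
    have hd : dist x k = ‖x - k‖ := dist_eq_norm x k
    have habs : ‖grapheneF x‖ = ‖grapheneF x‖ := rfl
    have hlow' := hlow (x - k)
    have hup' := hup (x - k)
    have ht1 : ‖L (x - k)‖ ≤ ‖grapheneF x‖ + ‖grapheneF x - L (x - k)‖ := by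
      have h := norm_sub_le (grapheneF x) (grapheneF x - L (x - k))
      have he : grapheneF x - (grapheneF x - L (x - k)) = L (x - k) := by ring
      rwa [he] at h
    have ht2 : ‖grapheneF x‖ ≤ ‖grapheneF x - L (x - k)‖ + ‖L (x - k)‖ := by
      have h := norm_add_le (grapheneF x - L (x - k)) (L (x - k))
      have he : grapheneF x - L (x - k) + L (x - k) = grapheneF x := by ring
      rwa [he] at h
    rw [habs, hd]
    constructor
    · linarith
    · linarith
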